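/- Let f ∈ C¹(ℝ) satisfy f(0) = 0 and f(s)·s − f'(s)·s² < 0 for every s ≠ 0, and set F(s) := ∫₀^s f(t) dt. Then 2F(s) − f(s)·s < 0 for every s ≠ 0. -/

import Mathlib

/-- If `f ∈ C¹(ℝ)`, `f(0)=0` and `f(s)s - f'(s)s² < 0` for all `s ≠ 0`, then
`2F(s) - f(s)s < 0` for all `s ≠ 0`, where `F(s) = ∫₀ˢ f`. -/
theorem two_F_lt_fs
    (f : ℝ → ℝ) (hf : ContDiff ℝ 1 f) (hf0 : f 0 = 0)
    (hsuper : ∀ s : ℝ, s ≠ 0 → f s * s - deriv f s * s ^ 2 < 0) :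
    ∀ s : ℝ, s ≠ 0 → 2 * (∫ t in (0 : ℝ)..s, f t) - f s * s < 0 := by
  have hfc : Continuous f := hf.continuous
  have hdf : Differentiable ℝ f := hf.differentiable one_ne_zero
  set g : ℝ → ℝ := fun s => 2 * (∫ t in (0 : ℝ)..s, f t) - f s * s with hgdef
  have hg' : ∀ s : ℝ, HasDerivAt g (f s - deriv f s * s) s := by
    intro s
    have h1 : HasDerivAt (fun u : ℝ => ∫ t in (0 : ℝ)..u, f t) (f s) s :=
      intervalIntegral.integral_hasDerivAt_right (hfc.intervalIntegrable _ _)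
        (hfc.stronglyMeasurableAtFilter _ _) hfc.continuousAt
    have h2 : HasDerivAt (fun u : ℝ => f u * u) (deriv f s * s + f s * 1) s :=
      ((hdf s).hasDerivAt).mul (hasDerivAt_id s)
    have h3 : HasDerivAt g (2 * f s - (deriv f s * s + f s * 1)) s :=
      (h1.const_mul (2 : ℝ)).sub h2
    convert h3 using 1
    ring
  have hgd : Differentiable ℝ g := fun s => (hg' s).differentiableAt
  have hderiv : ∀ s, deriv g s = f s - deriv f s * s := fun s => (hg' s).deriv
  have hg0 : g 0 = 0 := by simp [hgdef, hf0]
  intro s hs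
  rcases lt_or_gt_of_ne hs with hneg | hpos
  · have hmono : StrictMonoOn g (Set.Icc s 0) := by
      apply strictMonoOn_of_deriv_pos (convex_Icc s 0) hgd.continuous.continuousOn
      intro x hx
      rw [interior_Icc] at hx
      rw [hderiv]
      have hx0 : x ≠ 0 := ne_of_lt hx.2
      have h := hsuper x hx0
      nlinarith [hx.2]
    have := hmono (Set.left_mem_Icc.mpr hneg.le) (Set.right_mem_Icc.mpr hneg.le) hneg
    rw [hg0] at this
    exact this
  · have hanti : StrictAntiOn g (Set.Icc 0 s) := by
      apply strictAntiOn_of_deriv_neg (convex_Icc 0 s) hgd.continuous.continuousOn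
      intro x hx
      rw [interior_Icc] at hx
      rw [hderiv]
      have hx0 : x ≠ 0 := ne_of_gt hx.1
      have h := hsuper x hx0
      nlinarith [hx.1]
    have := hanti (Set.left_mem_Icc.mpr hpos.le) (Set.right_mem_Icc.mpr hpos.le) hpos
    rw [hg0] at this
    exact this
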